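/- Let G and G' be achievement positional games on disjoint vertex sets. If o(G)=o(G')=L^-, then o(G∪G')∈{L, L^-}; i.e. Left has a winning strategy on G∪G' as first player and a non-losing strategy on G∪G' as second player. -/

import Mathlib

namespace APG

/-- The two players: Left and Right. -/
inductive Player : Type
  | L : Player
  | R : Player
deriving DecidableEq, Repr

/-- The opponent of a player. -/
def Player.other : Player → Player
  | .L => .R
  | .R => .L

/-- An achievement positional game: a finite vertex set together with the set of
blue edges (Left's winning sets) and the set of red edges (Right's winning sets). -/
structure Game : Type where
  V : Finset ℕ
  EL : Finset (Finset ℕ)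
  ER : Finset (Finset ℕ)

/-- The edges are nonempty subsets of the vertex set. -/
def WellFormed (G : Game) : Prop :=
  (∀ e ∈ G.EL, e ⊆ G.V ∧ e.Nonempty) ∧ (∀ e ∈ G.ER, e ⊆ G.V ∧ e.Nonempty)

/-- The winning sets of a given player. -/
def Game.edges (G : Game) : Player → Finset (Finset ℕ)
  | .L => G.EL
  | .R => G.ER

/-- The player who makes the `i`-th move (0-indexed) when `s` moves first. -/
def mover (s : Player) (i : ℕ) : Player := if i % 2 = 0 then s else s.other

/-- The set of vertices picked by player `p` along the history `h`
(the chronological list of the moves played so far), when `s` moved first. -/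
def picked (s p : Player) (h : List ℕ) : Finset ℕ :=
  ((Finset.range h.length).filter fun i => mover s i = p).image fun i => h.getD i 0

/-- The set `S` of picked vertices fills some edge of `E`. -/
def fills (E : Finset (Finset ℕ)) (S : Finset ℕ) : Prop := ∃ e ∈ E, e ⊆ S

/-- The game is over: some player has picked all the vertices of one of their edges. -/
def ended (G : Game) (s : Player) (h : List ℕ) : Prop :=
  fills G.EL (picked s .L h) ∨ fills G.ER (picked s .R h)

/-- `h` is a legal history: no vertex is picked twice, every picked vertex belongs to
the board, and no move is made after the game has ended. -/
def ValidHist (G : Game) (s : Player) (h : List ℕ) : Prop :=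
  h.Nodup ∧ (∀ x ∈ h, x ∈ G.V) ∧ ∀ k, k < h.length → ¬ ended G s (h.take k)

/-- A strategy: a map assigning to each position (history) a vertex to pick. -/
abbrev Strategy := List ℕ → ℕ

/-- Along `h`, every move of player `p` agrees with the strategy `σ`. -/
def Follows (s p : Player) (σ : Strategy) (h : List ℕ) : Prop :=
  ∀ k, k < h.length → mover s k = p → h.getD k 0 = σ (h.take k)

/-- A finished play: either the game has ended or all vertices have been picked. -/
def Complete (G : Game) (s : Player) (h : List ℕ) : Prop :=
  ended G s h ∨ h.length = G.V.card

/-- The strategy `σ` of player `p` always suggests a legal move (an unpicked vertex)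
whenever the game is not over and it is `p`'s turn. -/
def Legal (G : Game) (s p : Player) (σ : Strategy) : Prop :=
  ∀ h, ValidHist G s h → Follows s p σ h → ¬ ended G s h → h.length < G.V.card →
    mover s h.length = p → σ h ∈ G.V ∧ σ h ∉ h

/-- Player `p` has a winning strategy on `G` when `s` moves first: following it,
every finished play ends with `p` having filled one of their edges (and, the game
having ended right there, the opponent has not filled an edge first). -/
def WinsAs (G : Game) (s p : Player) : Prop :=
  ∃ σ : Strategy, Legal G s p σ ∧
    ∀ h, ValidHist G s h → Follows s p σ h → Complete G s h →
      fills (G.edges p) (picked s p h)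

/-- Player `p` has a non-losing strategy on `G` when `s` moves first: following it,
the opponent never fills one of their edges. -/
def NonLosingAs (G : Game) (s p : Player) : Prop :=
  ∃ σ : Strategy, Legal G s p σ ∧
    ∀ h, ValidHist G s h → Follows s p σ h → Complete G s h →
      ¬ fills (G.edges p.other) (picked s p.other h)

/-- The possible results of the game, for a fixed starting player. -/
inductive Result : Type
  | Lwin : Result
  | draw : Result
  | Rwin : Result
deriving DecidableEq, Repr

/-- The result of `G` with optimal play, when `s` moves first, is `r`:
a win for a player means that player has a winning strategy, a draw means
both players have non-losing strategies. -/
def resultIs (G : Game) (s : Player) : Result → Prop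
  | .Lwin => WinsAs G s .L
  | .Rwin => WinsAs G s .R
  | .draw => NonLosingAs G s .L ∧ NonLosingAs G s .R

/-- An outcome: the pair of results with optimal play
(when Left starts, when Right starts). -/
abbrev Outcome := Result × Result

/-- `G` has outcome `o`. -/
def hasOutcome (G : Game) (o : Outcome) : Prop :=
  resultIs G .L o.1 ∧ resultIs G .R o.2

/-- Numerical value of a result, from Left's point of view:
Right wins < draw < Left wins. -/
def Result.val : Result → ℕ
  | .Rwin => 0
  | .draw => 1
  | .Lwin => 2

/-- The partial order `≤_L` on outcomes, comparing both components simultaneously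
from Left's point of view. -/
def outLE (o o' : Outcome) : Prop := o.1.val ≤ o'.1.val ∧ o.2.val ≤ o'.2.val

def oL : Outcome := (.Lwin, .Lwin)
def oLminus : Outcome := (.Lwin, .draw)
def oN : Outcome := (.Lwin, .Rwin)
def oD : Outcome := (.draw, .draw)
def oRminus : Outcome := (.draw, .Rwin)
def oR : Outcome := (.Rwin, .Rwin)

/-- The updated game `G_u` after Left has picked `u`. -/
def subL (G : Game) (u : ℕ) : Game where
  V := G.V.erase u
  EL := G.EL.image fun e => e.erase u
  ER := G.ER.filter fun e => u ∉ e

/-- The updated game `G^u` after Right has picked `u`. -/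
def subR (G : Game) (u : ℕ) : Game where
  V := G.V.erase u
  EL := G.EL.filter fun e => u ∉ e
  ER := G.ER.image fun e => e.erase u

/-- The updated game `G_u^v` after Left has picked `u` and Right has picked `v`. -/
def updLR (G : Game) (u v : ℕ) : Game where
  V := (G.V.erase u).erase v
  EL := (G.EL.filter fun e => v ∉ e).image fun e => e.erase u
  ER := (G.ER.filter fun e => u ∉ e).image fun e => e.erase v

/-- The disjoint union of two games. -/
def gunion (G G' : Game) : Game where
  V := G.V ∪ G'.V
  EL := G.EL ∪ G'.EL
  ER := G.ER ∪ G'.ER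

/-! ### Toolkit lemmas -/

lemma Player.other_other (p : Player) : p.other.other = p := by cases p <;> rfl

lemma Player.other_ne (p : Player) : p.other ≠ p := by cases p <;> simp [Player.other]

lemma Player.eq_other_of_ne {p q : Player} (h : q ≠ p) : q = p.other := by
  cases p <;> cases q <;> simp_all [Player.other]

lemma mover_succ (s : Player) (n : ℕ) : mover s (n + 1) = (mover s n).other := by
  rcases Nat.even_or_odd n with he | ho
  · have h0 : n % 2 = 0 := Nat.even_iff.mp he
    have h1 : (n+1) % 2 = 1 := by omega
    simp [mover, h0, h1]
  · have h0 : n % 2 = 1 := Nat.odd_iff.mp ho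
    have h1 : (n+1) % 2 = 0 := by omega
    simp [mover, h0, h1, Player.other_other]

lemma mover_zero (s : Player) : mover s 0 = s := by simp [mover]

lemma picked_nil (s p : Player) : picked s p [] = ∅ := by simp [picked]

lemma picked_concat (s p : Player) (h : List ℕ) (x : ℕ) :
    picked s p (h ++ [x]) =
      if mover s h.length = p then insert x (picked s p h) else picked s p h := by
  classical
  unfold picked
  have hlen : (h ++ [x]).length = h.length + 1 := by simp
  rw [hlen, Finset.range_add_one]
  have hgetD : ∀ i ∈ Finset.range h.length, (h ++ [x]).getD i 0 = h.getD i 0 := by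
    intro i hi
    rw [Finset.mem_range] at hi
    simp [List.getD, List.getElem?_append_left hi]
  have hgx : (h ++ [x]).getD h.length 0 = x := by
    simp [List.getD]
  by_cases hm : mover s h.length = p
  · rw [Finset.filter_insert, if_pos hm, Finset.image_insert, hgx, if_pos hm]
    congr 1
    exact Finset.image_congr (fun i hi => hgetD i (Finset.mem_of_mem_filter i hi))
  · rw [Finset.filter_insert, if_neg hm, if_neg hm]
    exact Finset.image_congr (fun i hi => hgetD i (Finset.mem_of_mem_filter i hi))

lemma mem_of_mem_picked {s p : Player} {h : List ℕ} {a : ℕ} (ha : a ∈ picked s p h) :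
    a ∈ h := by
  unfold picked at ha
  rcases Finset.mem_image.mp ha with ⟨i, hi, hia⟩
  have hilt : i < h.length := Finset.mem_range.mp (Finset.mem_of_mem_filter i hi)
  subst hia
  rw [List.getD_eq_getElem h 0 hilt]
  exact List.getElem_mem hilt

lemma picked_subset_toFinset (s p : Player) (h : List ℕ) :
    picked s p h ⊆ h.toFinset := fun a ha => List.mem_toFinset.mpr (mem_of_mem_picked ha)

lemma toFinset_eq_picked_union (s : Player) (h : List ℕ) :
    h.toFinset = picked s .L h ∪ picked s .R h := by
  apply Finset.Subset.antisymm
  · intro a ha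
    rw [List.mem_toFinset] at ha
    rcases List.getElem_of_mem ha with ⟨i, hi, hgi⟩
    have hgd : h.getD i 0 = a := by
      simp [List.getD, List.getElem?_eq_getElem hi, hgi]
    have : a ∈ picked s (mover s i) h := by
      unfold picked
      exact Finset.mem_image.mpr ⟨i, Finset.mem_filter.mpr ⟨Finset.mem_range.mpr hi, rfl⟩, hgd⟩
    cases hm : mover s i
    · rw [hm] at this; exact Finset.mem_union_left _ this
    · rw [hm] at this; exact Finset.mem_union_right _ this
  · intro a ha
    rcases Finset.mem_union.mp ha with h1 | h1 <;>
      exact List.mem_toFinset.mpr (mem_of_mem_picked h1)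

lemma fills_mono {E : Finset (Finset ℕ)} {S T : Finset ℕ} (hST : S ⊆ T) :
    fills E S → fills E T := fun ⟨e, he, hes⟩ => ⟨e, he, hes.trans hST⟩

lemma fills_union_iff {E₁ E₂ : Finset (Finset ℕ)} {S : Finset ℕ} :
    fills (E₁ ∪ E₂) S ↔ fills E₁ S ∨ fills E₂ S := by
  constructor
  · rintro ⟨e, he, hs⟩
    rcases Finset.mem_union.mp he with h | h
    · exact Or.inl ⟨e, h, hs⟩
    · exact Or.inr ⟨e, h, hs⟩
  · rintro (⟨e, he, hs⟩ | ⟨e, he, hs⟩)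
    · exact ⟨e, Finset.mem_union_left _ he, hs⟩
    · exact ⟨e, Finset.mem_union_right _ he, hs⟩

lemma validHist_concat_elim {H : Game} {s : Player} {h : List ℕ} {x : ℕ}
    (hv : ValidHist H s (h ++ [x])) :
    ValidHist H s h ∧ x ∉ h ∧ x ∈ H.V ∧ ¬ ended H s h := by
  obtain ⟨hnd, hmem, hne⟩ := hv
  have hxh : x ∉ h := by
    rw [List.nodup_append] at hnd
    intro hx
    exact hnd.2.2 x hx x (List.mem_singleton_self x) rfl
  have htk : ∀ k, k ≤ h.length → (h ++ [x]).take k = h.take k := by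
    intro k hk
    rw [List.take_append_of_le_length hk]
  have hlen : (h ++ [x]).length = h.length + 1 := by simp
  refine ⟨⟨(List.nodup_append.mp hnd).1, fun y hy => hmem y (List.mem_append_left _ hy), ?_⟩,
    hxh, hmem x (List.mem_append_right _ (List.mem_singleton_self x)), ?_⟩
  · intro k hk
    have := hne k (by omega)
    rwa [htk k (le_of_lt hk)] at this
  · have := hne h.length (by omega)
    rwa [htk h.length le_rfl, List.take_length] at this

lemma validHist_concat_intro {H : Game} {s : Player} {h : List ℕ} {x : ℕ}
    (hv : ValidHist H s h) (hx : x ∉ h) (hxV : x ∈ H.V) (hne : ¬ ended H s h) :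
    ValidHist H s (h ++ [x]) := by
  obtain ⟨hnd, hmem, hnend⟩ := hv
  refine ⟨?_, ?_, ?_⟩
  · rw [List.nodup_append]
    exact ⟨hnd, List.nodup_singleton x, fun a ha b hb hab => hx (by subst hab; rw [List.mem_singleton.mp hb] at ha; exact ha)⟩
  · intro y hy
    rcases List.mem_append.mp hy with h1 | h1
    · exact hmem y h1
    · rwa [List.mem_singleton.mp h1]
  · intro k hk
    have hlen : (h ++ [x]).length = h.length + 1 := by simp
    rw [hlen] at hk
    rcases Nat.lt_or_ge k h.length with hlt | hge
    · rw [List.take_append_of_le_length (le_of_lt hlt)]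
      exact hnend k hlt
    · have hkk : k = h.length := by omega
      subst hkk
      rw [List.take_append_of_le_length le_rfl, List.take_length]
      exact hne

lemma follows_concat_elim {s p : Player} {σ : Strategy} {h : List ℕ} {x : ℕ}
    (hf : Follows s p σ (h ++ [x])) :
    Follows s p σ h ∧ (mover s h.length = p → x = σ h) := by
  constructor
  · intro k hk hm
    have := hf k (by simp; omega) hm
    rwa [List.take_append_of_le_length (le_of_lt hk),
      List.getD_append _ _ _ _ hk] at this
  · intro hm
    have := hf h.length (by simp) hm
    rwa [List.take_append_of_le_length le_rfl, List.take_length,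
      List.getD_append_right _ _ _ _ le_rfl, Nat.sub_self] at this

lemma follows_concat_intro {s p : Player} {σ : Strategy} {h : List ℕ} {x : ℕ}
    (hf : Follows s p σ h) (hx : mover s h.length = p → x = σ h) :
    Follows s p σ (h ++ [x]) := by
  intro k hk hm
  have hlen : (h ++ [x]).length = h.length + 1 := by simp
  rw [hlen] at hk
  rcases Nat.lt_or_ge k h.length with hlt | hge
  · rw [List.take_append_of_le_length (le_of_lt hlt), List.getD_append _ _ _ _ hlt]
    exact hf k hlt hm
  · have hkk : k = h.length := by omega
    subst hkk
    rw [List.take_append_of_le_length le_rfl, List.take_length,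
      List.getD_append_right _ _ _ _ le_rfl, Nat.sub_self]
    exact hx hm

lemma valid_length_le {H : Game} {s : Player} {h : List ℕ} (hv : ValidHist H s h) :
    h.length ≤ H.V.card := by
  have h1 : h.toFinset.card = h.length := List.toFinset_card_of_nodup hv.1
  have h2 : h.toFinset ⊆ H.V := fun a ha => hv.2.1 a (List.mem_toFinset.mp ha)
  calc h.length = h.toFinset.card := h1.symm
    _ ≤ H.V.card := Finset.card_le_card h2

lemma not_ended_nil {H : Game} (hwf : WellFormed H) (s : Player) : ¬ ended H s [] := by
  rintro (⟨e, he, hs⟩ | ⟨e, he, hs⟩)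
  · rw [picked_nil] at hs
    rcases (hwf.1 e he).2 with ⟨a, ha⟩
    exact absurd (hs ha) (Finset.notMem_empty a)
  · rw [picked_nil] at hs
    rcases (hwf.2 e he).2 with ⟨a, ha⟩
    exact absurd (hs ha) (Finset.notMem_empty a)

/-- A fallback fresh vertex. -/
noncomputable def fresh (W : Finset ℕ) (h : List ℕ) : ℕ :=
  if hn : (W \ h.toFinset).Nonempty then (W \ h.toFinset).min' hn else 0

lemma fresh_spec {W : Finset ℕ} {h : List ℕ} (hnd : h.Nodup) (hsub : ∀ x ∈ h, x ∈ W)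
    (hlen : h.length < W.card) : fresh W h ∈ W ∧ fresh W h ∉ h := by
  have hne : (W \ h.toFinset).Nonempty := by
    rw [Finset.sdiff_nonempty]
    intro hWsub
    have : W.card ≤ h.toFinset.card := Finset.card_le_card hWsub
    rw [List.toFinset_card_of_nodup hnd] at this
    omega
  have hmem := Finset.min'_mem _ hne
  rw [Finset.mem_sdiff] at hmem
  rw [fresh, dif_pos hne]
  exact ⟨hmem.1, fun hc => hmem.2 (List.mem_toFinset.mpr hc)⟩

/-! ### Zermelo: either Left wins or Right can avoid losing -/

open Classical in
/-- Fuel-indexed "Left can force a win from position `h`". -/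
def Win (H : Game) (s : Player) : ℕ → List ℕ → Prop
  | 0, h => fills H.EL (picked s .L h)
  | f+1, h =>
    if Complete H s h then fills H.EL (picked s .L h)
    else if mover s h.length = .L then
      ∃ x, (x ∈ H.V ∧ x ∉ h) ∧ Win H s f (h ++ [x])
    else
      ∀ x, (x ∈ H.V ∧ x ∉ h) → Win H s f (h ++ [x])

lemma win_of_complete {H : Game} {s : Player} {f : ℕ} {h : List ℕ}
    (hc : Complete H s h) (hw : Win H s f h) : fills H.EL (picked s .L h) := by
  cases f with
  | zero => exact hw
  | succ f => rw [Win, if_pos hc] at hw; exact hw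

lemma not_win_of_complete {H : Game} {s : Player} {f : ℕ} {h : List ℕ}
    (hc : Complete H s h) (hw : ¬ Win H s f h) : ¬ fills H.EL (picked s .L h) := by
  cases f with
  | zero => exact hw
  | succ f => rw [Win, if_pos hc] at hw; exact hw

open Classical in
noncomputable def zstratL (H : Game) (s : Player) : Strategy := fun h =>
  if hx : ∃ x, (x ∈ H.V ∧ x ∉ h) ∧ Win H s (H.V.card - (h.length + 1)) (h ++ [x]) then
    hx.choose
  else fresh H.V h

open Classical in
noncomputable def zstratR (H : Game) (s : Player) : Strategy := fun h =>
  if hx : ∃ x, (x ∈ H.V ∧ x ∉ h) ∧ ¬ Win H s (H.V.card - (h.length + 1)) (h ++ [x]) then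
    hx.choose
  else fresh H.V h

lemma zstratL_invariant {H : Game} {s : Player} (hw : Win H s H.V.card []) :
    ∀ h, ValidHist H s h → Follows s .L (zstratL H s) h →
      Win H s (H.V.card - h.length) h := by
  intro h
  induction h using List.reverseRecOn with
  | nil => intro _ _; simpa using hw
  | append_singleton h x ih =>
    intro hv hf
    obtain ⟨hvh, hxh, hxV, hne⟩ := validHist_concat_elim hv
    obtain ⟨hfh, hfx⟩ := follows_concat_elim hf
    have ihw := ih hvh hfh
    have hlen : h.length < H.V.card := by
      have := valid_length_le hv
      simp at this; omega
    have hfuel : H.V.card - h.length = (H.V.card - (h.length + 1)) + 1 := by omega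
    rw [hfuel, Win] at ihw
    have hnc : ¬ Complete H s h := by
      rintro (hc | hc)
      · exact hne hc
      · omega
    rw [if_neg hnc] at ihw
    by_cases hm : mover s h.length = .L
    · rw [if_pos hm] at ihw
      have hx := hfx hm
      rw [zstratL] at hx
      rw [dif_pos ihw] at hx
      rw [hx]
      have := ihw.choose_spec.2
      simpa using this
    · rw [if_neg hm] at ihw
      have := ihw x ⟨hxV, hxh⟩
      simpa using this

lemma zstratR_invariant {H : Game} {s : Player} (hw : ¬ Win H s H.V.card []) :
    ∀ h, ValidHist H s h → Follows s .R (zstratR H s) h →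
      ¬ Win H s (H.V.card - h.length) h := by
  intro h
  induction h using List.reverseRecOn with
  | nil => intro _ _; simpa using hw
  | append_singleton h x ih =>
    intro hv hf
    obtain ⟨hvh, hxh, hxV, hne⟩ := validHist_concat_elim hv
    obtain ⟨hfh, hfx⟩ := follows_concat_elim hf
    have ihw := ih hvh hfh
    have hlen : h.length < H.V.card := by
      have := valid_length_le hv
      simp at this; omega
    have hfuel : H.V.card - h.length = (H.V.card - (h.length + 1)) + 1 := by omega
    rw [hfuel, Win] at ihw
    have hnc : ¬ Complete H s h := by
      rintro (hc | hc)
      · exact hne hc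
      · omega
    rw [if_neg hnc] at ihw
    by_cases hm : mover s h.length = .L
    · rw [if_pos hm] at ihw
      push_neg at ihw
      have := ihw x ⟨hxV, hxh⟩
      simpa using this
    · rw [if_neg hm] at ihw
      push_neg at ihw
      have hmr : mover s h.length = .R := by
        cases hmm : mover s h.length
        · exact absurd hmm hm
        · rfl
      have hx := hfx hmr
      rw [zstratR] at hx
      have hex : ∃ x, (x ∈ H.V ∧ x ∉ h) ∧
          ¬ Win H s (H.V.card - (h.length + 1)) (h ++ [x]) := by
        obtain ⟨y, hy1, hy2⟩ := ihw
        exact ⟨y, hy1, hy2⟩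
      rw [dif_pos hex] at hx
      rw [hx]
      have := hex.choose_spec.2
      simpa using this

lemma zermelo (H : Game) (s : Player) : WinsAs H s .L ∨ NonLosingAs H s .R := by
  by_cases hw : Win H s H.V.card []
  · left
    refine ⟨zstratL H s, ?_, ?_⟩
    · intro h hv hf hne hlen hm
      have ihw := zstratL_invariant hw h hv hf
      have hfuel : H.V.card - h.length = (H.V.card - (h.length + 1)) + 1 := by omega
      rw [hfuel, Win] at ihw
      have hnc : ¬ Complete H s h := by
        rintro (hc | hc)
        · exact hne hc
        · omega
      rw [if_neg hnc, if_pos hm] at ihw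
      rw [zstratL, dif_pos ihw]
      exact ⟨ihw.choose_spec.1.1, ihw.choose_spec.1.2⟩
    · intro h hv hf hc
      exact win_of_complete hc (zstratL_invariant hw h hv hf)
  · right
    refine ⟨zstratR H s, ?_, ?_⟩
    · intro h hv hf hne hlen hm
      by_cases hex : ∃ x, (x ∈ H.V ∧ x ∉ h) ∧
          ¬ Win H s (H.V.card - (h.length + 1)) (h ++ [x])
      · rw [zstratR, dif_pos hex]
        exact ⟨hex.choose_spec.1.1, hex.choose_spec.1.2⟩
      · rw [zstratR, dif_neg hex]
        exact fresh_spec hv.1 hv.2.1 hlen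
    · intro h hv hf hc
      exact not_win_of_complete hc (zstratR_invariant hw h hv hf)

/-! ### Component lemmas -/

/-- Along a valid play following a non-losing strategy for Left, Right never fills. -/
lemma noRfill_of_nonlosing {H : Game} {s : Player} {σ : Strategy}
    (hσ : ∀ h, ValidHist H s h → Follows s .L σ h → Complete H s h →
      ¬ fills (H.edges Player.L.other) (picked s Player.L.other h)) :
    ∀ g, ValidHist H s g → Follows s .L σ g → ¬ fills H.ER (picked s .R g) := by
  intro g hv hf hfill
  exact hσ g hv hf (Or.inl (Or.inr hfill)) hfill

/-- Along a valid play following a winning first-player strategy for Left,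
Right never fills. -/
lemma noRfill_of_winning {H : Game} {σ : Strategy} (hwf : WellFormed H)
    (hσ : ∀ h, ValidHist H .L h → Follows .L .L σ h → Complete H .L h →
      fills (H.edges .L) (picked .L .L h)) :
    ∀ g, ValidHist H .L g → Follows .L .L σ g → ¬ fills H.ER (picked .L .R g) := by
  intro g hv hf hfill
  have hc : Complete H .L g := Or.inl (Or.inr hfill)
  have hfl : fills H.EL (picked .L .L g) := hσ g hv hf hc
  rcases List.eq_nil_or_concat g with rfl | ⟨g₀, z, hgz⟩
  · rw [picked_nil] at hfill
    obtain ⟨e, he, hs⟩ := hfill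
    rcases (hwf.2 e he).2 with ⟨a, ha⟩
    exact Finset.notMem_empty a (hs ha)
  · rw [List.concat_eq_append] at hgz
    subst hgz
    have hne := (validHist_concat_elim hv).2.2.2
    rw [picked_concat] at hfill hfl
    by_cases hm : mover .L g₀.length = .L
    · rw [if_neg (by simp [hm])] at hfill
      exact hne (Or.inr hfill)
    · rw [if_neg hm] at hfl
      exact hne (Or.inl hfl)

/-- Key extension lemma: following a winning first-player strategy, Left's picked
vertices together with all yet-unpicked vertices always fill a blue edge. -/
lemma fills_blue_all {H : Game} {σ : Strategy} (hleg : Legal H .L .L σ)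
    (hσ : ∀ h, ValidHist H .L h → Follows .L .L σ h → Complete H .L h →
      fills (H.edges .L) (picked .L .L h)) :
    ∀ g, ValidHist H .L g → Follows .L .L σ g →
      fills H.EL (picked .L .L g ∪ (H.V \ g.toFinset)) := by
  suffices key : ∀ n g, H.V.card - g.length ≤ n → ValidHist H .L g → Follows .L .L σ g →
      fills H.EL (picked .L .L g ∪ (H.V \ g.toFinset)) by
    intro g hv hf
    exact key _ g le_rfl hv hf
  intro n
  induction n with
  | zero =>
    intro g hn hv hf
    have hlen := valid_length_le hv
    have hcomp : Complete H .L g := Or.inr (by omega)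
    exact fills_mono Finset.subset_union_left (hσ g hv hf hcomp)
  | succ n ih =>
    intro g hn hv hf
    by_cases hc : Complete H .L g
    · exact fills_mono Finset.subset_union_left (hσ g hv hf hc)
    · have hne : ¬ ended H .L g := fun he => hc (Or.inl he)
      have hlen : g.length < H.V.card := by
        have h1 := valid_length_le hv
        have h2 : g.length ≠ H.V.card := fun he => hc (Or.inr he)
        omega
      by_cases hm : mover .L g.length = .L
      · obtain ⟨hxV, hxg⟩ := hleg g hv hf hne hlen hm
        have hv' := validHist_concat_intro hv hxg hxV hne
        have hf' := follows_concat_intro hf (fun _ => rfl)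
        have := ih (g ++ [σ g]) (by simp; omega) hv' hf'
        refine fills_mono ?_ this
        rw [picked_concat, if_pos hm]
        intro a ha
        rcases Finset.mem_union.mp ha with h1 | h1
        · rcases Finset.mem_insert.mp h1 with rfl | h2
          · exact Finset.mem_union_right _
              (Finset.mem_sdiff.mpr ⟨hxV, fun hc2 => hxg (List.mem_toFinset.mp hc2)⟩)
          · exact Finset.mem_union_left _ h2
        · rcases Finset.mem_sdiff.mp h1 with ⟨ha1, ha2⟩
          refine Finset.mem_union_right _ (Finset.mem_sdiff.mpr ⟨ha1, fun hc2 => ha2 ?_⟩)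
          simp [List.mem_toFinset.mp hc2]
      · obtain ⟨hxV, hxg⟩ := fresh_spec (W := H.V) hv.1 hv.2.1 hlen
        set y := fresh H.V g with hy
        have hv' := validHist_concat_intro hv hxg hxV hne
        have hf' : Follows Player.L Player.L σ (g ++ [y]) := follows_concat_intro hf (fun hc2 => absurd hc2 hm)
        have := ih (g ++ [y]) (by simp; omega) hv' hf'
        refine fills_mono ?_ this
        rw [picked_concat, if_neg hm]
        intro a ha
        rcases Finset.mem_union.mp ha with h1 | h1
        · exact Finset.mem_union_left _ h1
        · rcases Finset.mem_sdiff.mp h1 with ⟨ha1, ha2⟩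
          refine Finset.mem_union_right _ (Finset.mem_sdiff.mpr ⟨ha1, fun hc2 => ha2 ?_⟩)
          simp [List.mem_toFinset.mp hc2]

/-! ### The combined strategy on a disjoint union -/

section Combo

variable (G G' : Game) (σ σ' : Strategy) (s : Player)

/-- Update of the two virtual histories after one of Left's moves. -/
def lupd (g g' : List ℕ) : List ℕ × List ℕ :=
  if mover .R g'.length = .L ∧ g'.length < G'.V.card then (g, g' ++ [σ' g'])
  else if mover s g.length = .L ∧ g.length < G.V.card then (g ++ [σ g], g')
  else (g, g')

/-- One step of the state machine computing the two virtual histories. -/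
def cstep (st : ℕ × List ℕ × List ℕ) (x : ℕ) : ℕ × List ℕ × List ℕ :=
  (st.1 + 1,
    if mover s st.1 = .R then
      if x ∈ G.V then (st.2.1 ++ [x], st.2.2)
      else if x ∈ G'.V then (st.2.1, st.2.2 ++ [x])
      else st.2
    else lupd G G' σ σ' s st.2.1 st.2.2)

/-- The state machine: from the actual history, compute the virtual histories. -/
def cSt (h : List ℕ) : ℕ × List ℕ × List ℕ := h.foldl (cstep G G' σ σ' s) (0, [], [])

lemma cSt_concat (h : List ℕ) (x : ℕ) :
    cSt G G' σ σ' s (h ++ [x]) = cstep G G' σ σ' s (cSt G G' σ σ' s h) x := by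
  simp [cSt, List.foldl_append]

lemma cSt_fst (h : List ℕ) : (cSt G G' σ σ' s h).1 = h.length := by
  induction h using List.reverseRecOn with
  | nil => rfl
  | append_singleton h x ih => rw [cSt_concat]; simp [cstep, ih]

/-- Left's combined strategy on the disjoint union. -/
noncomputable def combo : Strategy := fun h =>
  let g := (cSt G G' σ σ' s h).2.1
  let g' := (cSt G G' σ σ' s h).2.2
  if mover .R g'.length = .L ∧ g'.length < G'.V.card then
    (if σ' g' ∈ (h.toFinset ∩ G'.V) \ g'.toFinset then fresh (G.V ∪ G'.V) h else σ' g')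
  else if mover s g.length = .L ∧ g.length < G.V.card then
    (if σ g ∈ (h.toFinset ∩ G.V) \ g.toFinset then fresh (G.V ∪ G'.V) h else σ g)
  else fresh (G.V ∪ G'.V) h

/-- The invariant tying the actual history to the two virtual histories. -/
structure ComboInv (h g g' : List ℕ) : Prop where
  vg : ValidHist G s g
  fg : Follows s .L σ g
  vg' : ValidHist G' .R g'
  fg' : Follows .R .L σ' g'
  sub : g.toFinset ⊆ h.toFinset ∩ G.V
  sub' : g'.toFinset ⊆ h.toFinset ∩ G'.V
  pr : picked s .R g = picked s .R h ∩ G.V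
  pr' : picked .R .R g' = picked s .R h ∩ G'.V
  pl : picked s .L g ⊆ picked s .L h
  pl' : picked .R .L g' ⊆ picked s .L h
  parR : mover s h.length = .R →
    (mover s g.length = .R ∨ g.length = G.V.card) ∧
    (mover .R g'.length = .R ∨ g'.length = G'.V.card)
  parL : mover s h.length = .L →
    (mover s g.length = .R ∨ g.length = G.V.card) ∨
    (mover .R g'.length = .R ∨ g'.length = G'.V.card)

variable {G G' σ σ' s}

/-- Not-ended transfer from the union game to virtual component histories. -/
lemma inv_not_ended {h g g' : List ℕ} (inv : ComboInv G G' σ σ' s h g g')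
    (hne : ¬ ended (gunion G G') s h) :
    ¬ ended G s g ∧ ¬ ended G' .R g' := by
  constructor
  · rintro (hf | hf)
    · exact hne (Or.inl (fills_union_iff.mpr (Or.inl (fills_mono inv.pl hf))))
    · refine hne (Or.inr (fills_union_iff.mpr (Or.inl (fills_mono ?_ hf))))
      rw [inv.pr]; exact Finset.inter_subset_left
  · rintro (hf | hf)
    · exact hne (Or.inl (fills_union_iff.mpr (Or.inr (fills_mono inv.pl' hf))))
    · refine hne (Or.inr (fills_union_iff.mpr (Or.inr (fills_mono ?_ hf))))
      rw [inv.pr']; exact Finset.inter_subset_left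

lemma full_of_length_card {W : Finset ℕ} {g : List ℕ} (hnd : g.Nodup)
    (hsub : g.toFinset ⊆ W) (hlen : g.length = W.card) : g.toFinset = W := by
  apply Finset.eq_of_subset_of_card_le hsub
  rw [List.toFinset_card_of_nodup hnd, hlen]

end Combo

section ComboInvProof

variable {G G' : Game} {σ σ' : Strategy} {s : Player}

theorem combo_inv (hdisj : Disjoint G.V G'.V)
    (hlegσ : Legal G s .L σ) (hlegσ' : Legal G' .R .L σ') :
    ∀ h, ValidHist (gunion G G') s h → Follows s .L (combo G G' σ σ' s) h →
      ComboInv G G' σ σ' s h (cSt G G' σ σ' s h).2.1 (cSt G G' σ σ' s h).2.2 := by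
  intro h
  induction h using List.reverseRecOn with
  | nil =>
    intro _ _
    have h0 : (cSt G G' σ σ' s []).2.1 = [] := rfl
    have h0' : (cSt G G' σ σ' s []).2.2 = [] := rfl
    rw [h0, h0']
    refine ⟨⟨List.nodup_nil, by simp, by simp⟩, by intro k hk; simp at hk,
      ⟨List.nodup_nil, by simp, by simp⟩, by intro k hk; simp at hk,
      by simp, by simp, by simp [picked_nil],
      by simp [picked_nil], by simp [picked_nil], by simp [picked_nil],
      ?_, ?_⟩
    · intro hm
      exact ⟨Or.inl (by simpa using hm), Or.inl (by simp [mover_zero])⟩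
    · intro _
      exact Or.inr (Or.inl (by simp [mover_zero]))
  | append_singleton h x ih =>
    intro hv hf
    obtain ⟨hvh, hxh, hxV, hneU⟩ := validHist_concat_elim hv
    obtain ⟨hfh, hfx⟩ := follows_concat_elim hf
    have inv := ih hvh hfh
    set g := (cSt G G' σ σ' s h).2.1 with hgdef
    set g' := (cSt G G' σ σ' s h).2.2 with hg'def
    obtain ⟨hnEg, hnEg'⟩ := inv_not_ended inv hneU
    have hxVU : x ∈ G.V ∪ G'.V := hxV
    have hlen1 : (h ++ [x]).length = h.length + 1 := by simp
    have hlglen := valid_length_le inv.vg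
    have hlglen' := valid_length_le inv.vg'
    rcases hm : mover s h.length with _ | _
    -- ============ Left's move ============
    ·
      have hx : x = combo G G' σ σ' s h := hfx hm
      have hnR : ¬ (mover s h.length = Player.R) := by rw [hm]; exact fun hc => by cases hc
      by_cases hb1 : mover .R g'.length = .L ∧ g'.length < G'.V.card
      · -- Left answers (or virtually answers) in G'
        have hst2 : (cSt G G' σ σ' s (h ++ [x])).2 = (g, g' ++ [σ' g']) := by
          rw [cSt_concat]
          simp [cstep, cSt_fst, ← hgdef, ← hg'def, hnR, lupd, hb1]
        have hDg : mover s g.length = .R ∨ g.length = G.V.card := by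
          rcases inv.parL hm with h1 | h1
          · exact h1
          · exfalso
            rcases h1 with h2 | h2
            · rw [hb1.1] at h2; cases h2
            · have := hb1.2; omega
        obtain ⟨hmV, hmg'⟩ := hlegσ' g' inv.vg' inv.fg' hnEg' hb1.2 hb1.1
        have hxcomb : x = (if σ' g' ∈ (h.toFinset ∩ G'.V) \ g'.toFinset then
            fresh (G.V ∪ G'.V) h else σ' g') := by
          rw [hx]
          simp only [combo, ← hgdef, ← hg'def]
          rw [if_pos hb1]
        have hmL : σ' g' ∈ insert x (picked s .L h) := by
          by_cases hin : σ' g' ∈ (h.toFinset ∩ G'.V) \ g'.toFinset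
          · apply Finset.mem_insert_of_mem
            obtain ⟨hin1, hin2⟩ := Finset.mem_sdiff.mp hin
            have h2 := Finset.mem_inter.mp hin1
            have h3 : σ' g' ∈ picked s .L h ∪ picked s .R h := by
              rw [← toFinset_eq_picked_union]; exact h2.1
            rcases Finset.mem_union.mp h3 with h4 | h4
            · exact h4
            · exfalso
              have h5 : σ' g' ∈ picked .R .R g' := by
                rw [inv.pr']; exact Finset.mem_inter.mpr ⟨h4, h2.2⟩
              exact hmg' (mem_of_mem_picked h5)
          · rw [hxcomb, if_neg hin]; exact Finset.mem_insert_self _ _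
        have hmTF : σ' g' ∈ (h ++ [x]).toFinset := by
          rcases Finset.mem_insert.mp hmL with h1 | h1
          · simp [h1]
          · rw [List.mem_toFinset, List.mem_append]
            exact Or.inl (mem_of_mem_picked h1)
        rw [hst2]
        refine ⟨inv.vg, inv.fg, validHist_concat_intro inv.vg' hmg' hmV hnEg',
          follows_concat_intro inv.fg' (fun _ => rfl), ?_, ?_, ?_, ?_, ?_, ?_, ?_, ?_⟩
        · intro a ha
          have := inv.sub ha
          rw [Finset.mem_inter] at this
          exact Finset.mem_inter.mpr ⟨by
            rw [List.mem_toFinset, List.mem_append]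
            exact Or.inl (List.mem_toFinset.mp this.1), this.2⟩
        · intro a ha
          rw [List.mem_toFinset, List.mem_append] at ha
          rcases ha with h1 | h1
          · have := inv.sub' (List.mem_toFinset.mpr h1)
            rw [Finset.mem_inter] at this
            exact Finset.mem_inter.mpr ⟨by
              rw [List.mem_toFinset, List.mem_append]
              exact Or.inl (List.mem_toFinset.mp this.1), this.2⟩
          · rw [List.mem_singleton] at h1
            subst h1
            exact Finset.mem_inter.mpr ⟨hmTF, hmV⟩
        · rw [picked_concat, if_neg hnR]
          exact inv.pr
        · rw [picked_concat, if_neg (by rw [hb1.1]; exact fun hc => by cases hc),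
            picked_concat, if_neg hnR]
          exact inv.pr'
        · rw [picked_concat, if_pos hm]
          exact inv.pl.trans (Finset.subset_insert _ _)
        · rw [picked_concat, if_pos hb1.1, picked_concat, if_pos hm]
          intro a ha
          rcases Finset.mem_insert.mp ha with rfl | h1
          · exact hmL
          · exact Finset.mem_insert_of_mem (inv.pl' h1)
        · intro _
          refine ⟨hDg, Or.inl ?_⟩
          have hl2 : (g' ++ [σ' g']).length = g'.length + 1 := by simp
          rw [hl2, mover_succ, hb1.1]
          rfl
        · intro hcon
          rw [hlen1, mover_succ, hm] at hcon
          cases hcon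
      · by_cases hb2 : mover s g.length = .L ∧ g.length < G.V.card
        · -- Left answers (or virtually answers) in G
          have hst2 : (cSt G G' σ σ' s (h ++ [x])).2 = (g ++ [σ g], g') := by
            rw [cSt_concat]
            simp [cstep, cSt_fst, ← hgdef, ← hg'def, hnR, lupd, hb1, hb2]
          have hDg' : mover .R g'.length = .R ∨ g'.length = G'.V.card := by
            by_cases h1 : mover .R g'.length = .L
            · right
              have h2 : ¬ g'.length < G'.V.card := fun hc => hb1 ⟨h1, hc⟩
              omega
            · left
              cases hmm : mover .R g'.length with
              | L => exact absurd hmm h1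
              | R => rfl
          obtain ⟨hmV, hmg⟩ := hlegσ g inv.vg inv.fg hnEg hb2.2 hb2.1
          have hxcomb : x = (if σ g ∈ (h.toFinset ∩ G.V) \ g.toFinset then
              fresh (G.V ∪ G'.V) h else σ g) := by
            rw [hx]
            simp only [combo, ← hgdef, ← hg'def]
            rw [if_neg hb1, if_pos hb2]
          have hmL : σ g ∈ insert x (picked s .L h) := by
            by_cases hin : σ g ∈ (h.toFinset ∩ G.V) \ g.toFinset
            · apply Finset.mem_insert_of_mem
              obtain ⟨hin1, hin2⟩ := Finset.mem_sdiff.mp hin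
              have h2 := Finset.mem_inter.mp hin1
              have h3 : σ g ∈ picked s .L h ∪ picked s .R h := by
                rw [← toFinset_eq_picked_union]; exact h2.1
              rcases Finset.mem_union.mp h3 with h4 | h4
              · exact h4
              · exfalso
                have h5 : σ g ∈ picked s .R g := by
                  rw [inv.pr]; exact Finset.mem_inter.mpr ⟨h4, h2.2⟩
                exact hmg (mem_of_mem_picked h5)
            · rw [hxcomb, if_neg hin]; exact Finset.mem_insert_self _ _
          have hmTF : σ g ∈ (h ++ [x]).toFinset := by
            rcases Finset.mem_insert.mp hmL with h1 | h1
            · simp [h1]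
            · rw [List.mem_toFinset, List.mem_append]
              exact Or.inl (mem_of_mem_picked h1)
          rw [hst2]
          refine ⟨validHist_concat_intro inv.vg hmg hmV hnEg,
            follows_concat_intro inv.fg (fun _ => rfl), inv.vg', inv.fg',
            ?_, ?_, ?_, ?_, ?_, ?_, ?_, ?_⟩
          · intro a ha
            rw [List.mem_toFinset, List.mem_append] at ha
            rcases ha with h1 | h1
            · have := inv.sub (List.mem_toFinset.mpr h1)
              rw [Finset.mem_inter] at this
              exact Finset.mem_inter.mpr ⟨by
                rw [List.mem_toFinset, List.mem_append]
                exact Or.inl (List.mem_toFinset.mp this.1), this.2⟩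
            · rw [List.mem_singleton] at h1
              subst h1
              exact Finset.mem_inter.mpr ⟨hmTF, hmV⟩
          · intro a ha
            have := inv.sub' ha
            rw [Finset.mem_inter] at this
            exact Finset.mem_inter.mpr ⟨by
              rw [List.mem_toFinset, List.mem_append]
              exact Or.inl (List.mem_toFinset.mp this.1), this.2⟩
          · rw [picked_concat, if_neg (by rw [hb2.1]; exact fun hc => by cases hc),
              picked_concat, if_neg hnR]
            exact inv.pr
          · rw [picked_concat, if_neg hnR]
            exact inv.pr'
          · rw [picked_concat, if_pos hb2.1, picked_concat, if_pos hm]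
            intro a ha
            rcases Finset.mem_insert.mp ha with rfl | h1
            · exact hmL
            · exact Finset.mem_insert_of_mem (inv.pl h1)
          · rw [picked_concat, if_pos hm]
            exact inv.pl'.trans (Finset.subset_insert _ _)
          · intro _
            refine ⟨Or.inl ?_, hDg'⟩
            have hl2 : (g ++ [σ g]).length = g.length + 1 := by simp
            rw [hl2, mover_succ, hb2.1]
            rfl
          · intro hcon
            rw [hlen1, mover_succ, hm] at hcon
            cases hcon
        · -- Left plays a free extra vertex, no virtual move
          have hst2 : (cSt G G' σ σ' s (h ++ [x])).2 = (g, g') := by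
            rw [cSt_concat]
            simp [cstep, cSt_fst, ← hgdef, ← hg'def, hnR, lupd, hb1, hb2]
          have hDg : mover s g.length = .R ∨ g.length = G.V.card := by
            by_cases h1 : mover s g.length = .L
            · right
              have h2 : ¬ g.length < G.V.card := fun hc => hb2 ⟨h1, hc⟩
              omega
            · left
              cases hmm : mover s g.length with
              | L => exact absurd hmm h1
              | R => rfl
          have hDg' : mover .R g'.length = .R ∨ g'.length = G'.V.card := by
            by_cases h1 : mover .R g'.length = .L
            · right
              have h2 : ¬ g'.length < G'.V.card := fun hc => hb1 ⟨h1, hc⟩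
              omega
            · left
              cases hmm : mover .R g'.length with
              | L => exact absurd hmm h1
              | R => rfl
          rw [hst2]
          refine ⟨inv.vg, inv.fg, inv.vg', inv.fg', ?_, ?_, ?_, ?_, ?_, ?_, ?_, ?_⟩
          · intro a ha
            have := inv.sub ha
            rw [Finset.mem_inter] at this
            exact Finset.mem_inter.mpr ⟨by
              rw [List.mem_toFinset, List.mem_append]
              exact Or.inl (List.mem_toFinset.mp this.1), this.2⟩
          · intro a ha
            have := inv.sub' ha
            rw [Finset.mem_inter] at this
            exact Finset.mem_inter.mpr ⟨by
              rw [List.mem_toFinset, List.mem_append]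
              exact Or.inl (List.mem_toFinset.mp this.1), this.2⟩
          · rw [picked_concat, if_neg hnR]
            exact inv.pr
          · rw [picked_concat, if_neg hnR]
            exact inv.pr'
          · rw [picked_concat, if_pos hm]
            exact inv.pl.trans (Finset.subset_insert _ _)
          · rw [picked_concat, if_pos hm]
            exact inv.pl'.trans (Finset.subset_insert _ _)
          · intro _
            exact ⟨hDg, hDg'⟩
          · intro hcon
            rw [hlen1, mover_succ, hm] at hcon
            cases hcon
    -- ============ Right's move ============
    · have hgR := (inv.parR hm).1
      have hg'R := (inv.parR hm).2
      rcases Finset.mem_union.mp hxVU with hxG | hxG'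
      · -- Right moved in G
        have hxnG' : x ∉ G'.V := Finset.disjoint_left.mp hdisj hxG
        have hst2 : (cSt G G' σ σ' s (h ++ [x])).2 = (g ++ [x], g') := by
          rw [cSt_concat]
          simp [cstep, cSt_fst, ← hgdef, ← hg'def, hm, hxG]
        have hgRR : mover s g.length = .R := by
          rcases hgR with h1 | h1
          · exact h1
          · exfalso
            have hfull : g.toFinset = G.V :=
              full_of_length_card inv.vg.1 (inv.sub.trans Finset.inter_subset_right) h1
            have hxg : x ∈ g.toFinset := hfull ▸ hxG
            exact hxh (List.mem_toFinset.mp (Finset.mem_inter.mp (inv.sub hxg)).1)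
        have hxng : x ∉ g := fun hc =>
          hxh (List.mem_toFinset.mp (Finset.mem_inter.mp (inv.sub (List.mem_toFinset.mpr hc))).1)
        rw [hst2]
        refine ⟨validHist_concat_intro inv.vg hxng hxG hnEg,
          follows_concat_intro inv.fg (fun hc => by rw [hgRR] at hc; cases hc),
          inv.vg', inv.fg', ?_, ?_, ?_, ?_, ?_, ?_, ?_, ?_⟩
        · intro a ha
          rw [List.mem_toFinset, List.mem_append] at ha
          rcases ha with h1 | h1
          · have := inv.sub (List.mem_toFinset.mpr h1)
            rw [Finset.mem_inter] at this
            exact Finset.mem_inter.mpr ⟨by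
              rw [List.mem_toFinset, List.mem_append]
              exact Or.inl (List.mem_toFinset.mp this.1), this.2⟩
          · rw [List.mem_singleton] at h1
            subst h1
            exact Finset.mem_inter.mpr ⟨by simp, hxG⟩
        · intro a ha
          have := inv.sub' ha
          rw [Finset.mem_inter] at this
          exact Finset.mem_inter.mpr ⟨by
            rw [List.mem_toFinset, List.mem_append]
            exact Or.inl (List.mem_toFinset.mp this.1), this.2⟩
        · rw [picked_concat, if_pos hgRR, picked_concat, if_pos hm, inv.pr,
            Finset.insert_inter_of_mem hxG]
        · rw [picked_concat, if_pos hm, Finset.insert_inter_of_notMem hxnG']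
          exact inv.pr'
        · rw [picked_concat, if_neg (by rw [hgRR]; exact fun hc => by cases hc),
            picked_concat, if_neg (by rw [hm]; exact fun hc => by cases hc)]
          exact inv.pl
        · rw [picked_concat, if_neg (by rw [hm]; exact fun hc => by cases hc)]
          exact inv.pl'
        · intro hcon
          rw [hlen1, mover_succ, hm] at hcon
          cases hcon
        · intro _
          exact Or.inr hg'R
      · -- Right moved in G'
        have hxnG : x ∉ G.V := fun hc => Finset.disjoint_left.mp hdisj hc hxG'
        have hst2 : (cSt G G' σ σ' s (h ++ [x])).2 = (g, g' ++ [x]) := by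
          rw [cSt_concat]
          simp [cstep, cSt_fst, ← hgdef, ← hg'def, hm, hxnG, hxG']
        have hg'RR : mover .R g'.length = .R := by
          rcases hg'R with h1 | h1
          · exact h1
          · exfalso
            have hfull : g'.toFinset = G'.V :=
              full_of_length_card inv.vg'.1 (inv.sub'.trans Finset.inter_subset_right) h1
            have hxg : x ∈ g'.toFinset := hfull ▸ hxG'
            exact hxh (List.mem_toFinset.mp (Finset.mem_inter.mp (inv.sub' hxg)).1)
        have hxng' : x ∉ g' := fun hc =>
          hxh (List.mem_toFinset.mp (Finset.mem_inter.mp (inv.sub' (List.mem_toFinset.mpr hc))).1)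
        rw [hst2]
        refine ⟨inv.vg, inv.fg, validHist_concat_intro inv.vg' hxng' hxG' hnEg',
          follows_concat_intro inv.fg' (fun hc => by rw [hg'RR] at hc; cases hc),
          ?_, ?_, ?_, ?_, ?_, ?_, ?_, ?_⟩
        · intro a ha
          have := inv.sub ha
          rw [Finset.mem_inter] at this
          exact Finset.mem_inter.mpr ⟨by
            rw [List.mem_toFinset, List.mem_append]
            exact Or.inl (List.mem_toFinset.mp this.1), this.2⟩
        · intro a ha
          rw [List.mem_toFinset, List.mem_append] at ha
          rcases ha with h1 | h1
          · have := inv.sub' (List.mem_toFinset.mpr h1)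
            rw [Finset.mem_inter] at this
            exact Finset.mem_inter.mpr ⟨by
              rw [List.mem_toFinset, List.mem_append]
              exact Or.inl (List.mem_toFinset.mp this.1), this.2⟩
          · rw [List.mem_singleton] at h1
            subst h1
            exact Finset.mem_inter.mpr ⟨by simp, hxG'⟩
        · rw [picked_concat, if_pos hm, Finset.insert_inter_of_notMem hxnG]
          exact inv.pr
        · rw [picked_concat, if_pos hg'RR, picked_concat, if_pos hm, inv.pr',
            Finset.insert_inter_of_mem hxG']
        · rw [picked_concat, if_neg (by rw [hm]; exact fun hc => by cases hc)]
          exact inv.pl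
        · rw [picked_concat, if_neg (by rw [hg'RR]; exact fun hc => by cases hc),
            picked_concat, if_neg (by rw [hm]; exact fun hc => by cases hc)]
          exact inv.pl'
        · intro hcon
          rw [hlen1, mover_succ, hm] at hcon
          cases hcon
        · intro _
          exact Or.inl hgR

end ComboInvProof

section Final

variable {G G' : Game} {σ σ' : Strategy} {s : Player}

lemma combo_legal (hdisj : Disjoint G.V G'.V)
    (hlegσ : Legal G s .L σ) (hlegσ' : Legal G' .R .L σ') :
    Legal (gunion G G') s .L (combo G G' σ σ' s) := by
  intro h hv hf hne hlen _
  have inv := combo_inv hdisj hlegσ hlegσ' h hv hf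
  set g := (cSt G G' σ σ' s h).2.1 with hgdef
  set g' := (cSt G G' σ σ' s h).2.2 with hg'def
  obtain ⟨hnEg, hnEg'⟩ := inv_not_ended inv hne
  have hfr : fresh (G.V ∪ G'.V) h ∈ G.V ∪ G'.V ∧ fresh (G.V ∪ G'.V) h ∉ h :=
    fresh_spec hv.1 hv.2.1 hlen
  by_cases hb1 : mover .R g'.length = .L ∧ g'.length < G'.V.card
  · obtain ⟨hmV, hmg'⟩ := hlegσ' g' inv.vg' inv.fg' hnEg' hb1.2 hb1.1
    by_cases hin : σ' g' ∈ (h.toFinset ∩ G'.V) \ g'.toFinset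
    · have heq : combo G G' σ σ' s h = fresh (G.V ∪ G'.V) h := by
        simp only [combo, ← hgdef, ← hg'def]
        rw [if_pos hb1, if_pos hin]
      rw [heq]; exact hfr
    · have heq : combo G G' σ σ' s h = σ' g' := by
        simp only [combo, ← hgdef, ← hg'def]
        rw [if_pos hb1, if_neg hin]
      rw [heq]
      refine ⟨Finset.mem_union_right _ hmV, fun hc => hin ?_⟩
      exact Finset.mem_sdiff.mpr ⟨Finset.mem_inter.mpr ⟨List.mem_toFinset.mpr hc, hmV⟩,
        fun hc2 => hmg' (List.mem_toFinset.mp hc2)⟩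
  · by_cases hb2 : mover s g.length = .L ∧ g.length < G.V.card
    · obtain ⟨hmV, hmg⟩ := hlegσ g inv.vg inv.fg hnEg hb2.2 hb2.1
      by_cases hin : σ g ∈ (h.toFinset ∩ G.V) \ g.toFinset
      · have heq : combo G G' σ σ' s h = fresh (G.V ∪ G'.V) h := by
          simp only [combo, ← hgdef, ← hg'def]
          rw [if_neg hb1, if_pos hb2, if_pos hin]
        rw [heq]; exact hfr
      · have heq : combo G G' σ σ' s h = σ g := by
          simp only [combo, ← hgdef, ← hg'def]
          rw [if_neg hb1, if_pos hb2, if_neg hin]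
        rw [heq]
        refine ⟨Finset.mem_union_left _ hmV, fun hc => hin ?_⟩
        exact Finset.mem_sdiff.mpr ⟨Finset.mem_inter.mpr ⟨List.mem_toFinset.mpr hc, hmV⟩,
          fun hc2 => hmg (List.mem_toFinset.mp hc2)⟩
    · have heq : combo G G' σ σ' s h = fresh (G.V ∪ G'.V) h := by
        simp only [combo, ← hgdef, ← hg'def]
        rw [if_neg hb1, if_neg hb2]
      rw [heq]; exact hfr

lemma combo_wins (hdisj : Disjoint G.V G'.V) (hG : WellFormed G) (hG' : WellFormed G')
    (hlegσ : Legal G .L .L σ)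
    (hσwin : ∀ h, ValidHist G .L h → Follows .L .L σ h → Complete G .L h →
      fills (G.edges .L) (picked .L .L h))
    (hlegσ' : Legal G' .R .L σ')
    (hσ'draw : ∀ h, ValidHist G' .R h → Follows .R .L σ' h → Complete G' .R h →
      ¬ fills (G'.edges Player.L.other) (picked .R Player.L.other h)) :
    ∀ h, ValidHist (gunion G G') .L h → Follows .L .L (combo G G' σ σ' .L) h →
      Complete (gunion G G') .L h →
      fills ((gunion G G').edges .L) (picked .L .L h) := by
  intro h hv hf hc
  have inv := combo_inv hdisj hlegσ hlegσ' h hv hf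
  set g := (cSt G G' σ σ' .L h).2.1 with hgdef
  set g' := (cSt G G' σ σ' .L h).2.2 with hg'def
  show fills (G.EL ∪ G'.EL) (picked .L .L h)
  rcases hc with (hL | hR) | hfull
  · exact hL
  · exfalso
    rcases fills_union_iff.mp hR with ⟨e, he, hes⟩ | ⟨e, he, hes⟩
    · have hes2 : e ⊆ picked .L .R g := by
        rw [inv.pr]
        exact fun a ha => Finset.mem_inter.mpr ⟨hes ha, (hG.2 e he).1 ha⟩
      exact noRfill_of_winning hG hσwin g inv.vg inv.fg ⟨e, he, hes2⟩
    · have hes2 : e ⊆ picked .R .R g' := by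
        rw [inv.pr']
        exact fun a ha => Finset.mem_inter.mpr ⟨hes ha, (hG'.2 e he).1 ha⟩
      exact noRfill_of_nonlosing hσ'draw g' inv.vg' inv.fg' ⟨e, he, hes2⟩
  · have hfin : h.toFinset = G.V ∪ G'.V :=
      full_of_length_card hv.1 (fun a ha => hv.2.1 a (List.mem_toFinset.mp ha)) hfull
    have hw2 := fills_blue_all hlegσ hσwin g inv.vg inv.fg
    refine fills_union_iff.mpr (Or.inl (fills_mono ?_ hw2))
    intro a ha
    rcases Finset.mem_union.mp ha with h1 | h1
    · exact inv.pl h1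
    · obtain ⟨haV, hag⟩ := Finset.mem_sdiff.mp h1
      have h2 : a ∈ h.toFinset := hfin ▸ Finset.mem_union_left _ haV
      have h3 : a ∈ picked .L .L h ∪ picked .L .R h := by
        rw [← toFinset_eq_picked_union]; exact h2
      rcases Finset.mem_union.mp h3 with h4 | h4
      · exact h4
      · exfalso
        have h5 : a ∈ picked .L .R g := by
          rw [inv.pr]; exact Finset.mem_inter.mpr ⟨h4, haV⟩
        exact hag (List.mem_toFinset.mpr (mem_of_mem_picked h5))

lemma combo_safe (hdisj : Disjoint G.V G'.V) (hG : WellFormed G) (hG' : WellFormed G')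
    (hlegσ : Legal G .R .L σ)
    (hσdraw : ∀ h, ValidHist G .R h → Follows .R .L σ h → Complete G .R h →
      ¬ fills (G.edges Player.L.other) (picked .R Player.L.other h))
    (hlegσ' : Legal G' .R .L σ')
    (hσ'draw : ∀ h, ValidHist G' .R h → Follows .R .L σ' h → Complete G' .R h →
      ¬ fills (G'.edges Player.L.other) (picked .R Player.L.other h)) :
    ∀ h, ValidHist (gunion G G') .R h → Follows .R .L (combo G G' σ σ' .R) h →
      Complete (gunion G G') .R h →
      ¬ fills ((gunion G G').edges Player.L.other) (picked .R Player.L.other h) := by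
  intro h hv hf _ hR
  have inv := combo_inv hdisj hlegσ hlegσ' h hv hf
  set g := (cSt G G' σ σ' .R h).2.1 with hgdef
  set g' := (cSt G G' σ σ' .R h).2.2 with hg'def
  have hR2 : fills (G.ER ∪ G'.ER) (picked .R .R h) := hR
  rcases fills_union_iff.mp hR2 with ⟨e, he, hes⟩ | ⟨e, he, hes⟩
  · have hes2 : e ⊆ picked .R .R g := by
      rw [inv.pr]
      exact fun a ha => Finset.mem_inter.mpr ⟨hes ha, (hG.2 e he).1 ha⟩
    exact noRfill_of_nonlosing hσdraw g inv.vg inv.fg ⟨e, he, hes2⟩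
  · have hes2 : e ⊆ picked .R .R g' := by
      rw [inv.pr']
      exact fun a ha => Finset.mem_inter.mpr ⟨hes ha, (hG'.2 e he).1 ha⟩
    exact noRfill_of_nonlosing hσ'draw g' inv.vg' inv.fg' ⟨e, he, hes2⟩

end Final

/-- If `o(G) = o(G') = L⁻`, then `o(G ∪ G') ∈ {L, L⁻}`: Left has a winning strategy on
`G ∪ G'` as first player and a non-losing strategy on `G ∪ G'` as second player. -/
theorem union_Lminus_Lminus (G G' : Game) (hG : WellFormed G) (hG' : WellFormed G')
    (hdisj : Disjoint G.V G'.V)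
    (hGo : hasOutcome G oLminus) (hG'o : hasOutcome G' oLminus) :
    (∃ o : Outcome, hasOutcome (gunion G G') o ∧ (o = oL ∨ o = oLminus)) ∧
      WinsAs (gunion G G') .L .L ∧ NonLosingAs (gunion G G') .R .L := by
  have hGwin : WinsAs G .L .L := hGo.1
  have hGdraw : NonLosingAs G .R .L := hGo.2.1
  have hG'draw : NonLosingAs G' .R .L := hG'o.2.1
  obtain ⟨σw, hlegw, hσw⟩ := hGwin
  obtain ⟨σd, hlegd, hσd⟩ := hGdraw
  obtain ⟨σd', hlegd', hσd'⟩ := hG'draw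
  have hwin : WinsAs (gunion G G') .L .L :=
    ⟨combo G G' σw σd' .L, combo_legal hdisj hlegw hlegd',
      combo_wins hdisj hG hG' hlegw hσw hlegd' hσd'⟩
  have hnl : NonLosingAs (gunion G G') .R .L :=
    ⟨combo G G' σd σd' .R, combo_legal hdisj hlegd hlegd',
      combo_safe hdisj hG hG' hlegd hσd hlegd' hσd'⟩
  refine ⟨?_, hwin, hnl⟩
  rcases zermelo (gunion G G') .R with hz | hz
  · exact ⟨oL, ⟨hwin, hz⟩, Or.inl rfl⟩
  · exact ⟨oLminus, ⟨hwin, hnl, hz⟩, Or.inr rfl⟩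
end APG
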